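/- Let r_0 ≥ 0, η ≥ 0, and sequences λ_n ∈ [0, λ] with λ < 1 and ρ_n ≥ 0, and define r_n recursively by r_n = η r_{n-1}² + λ_{n-1} r_{n-1} + ρ_{n-1} for n ≥ 1. Suppose for all n ≥ 1, 4ηρ_{n-1} < (1 − λ_{n-1})², and there exists C ≥ r_0 with sup_n (1 − λ_{n-1} − √((1 − λ_{n-1})² − 4ηρ_{n-1}))/(2η) ≤ C ≤ inf_n (1 − λ_{n-1} + √((1 − λ_{n-1})² − 4ηρ_{n-1}))/(2η). Then r_{n-1} ≤ C for all n ≥ 1. -/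
import Mathlib


/-- Uniform bound C on the perturbed quadratic recursion (Assertion 2, part 1). -/
theorem stmt_9 (r lam ρ : ℕ → ℝ) (η lamBar C : ℝ)
    (hr0 : 0 ≤ r 0) (hη : 0 < η)
    (hlam : ∀ n, 0 ≤ lam n ∧ lam n ≤ lamBar) (hlamBar : lamBar < 1)
    (hρ : ∀ n, 0 ≤ ρ n)
    (hrec : ∀ n : ℕ, 1 ≤ n → r n = η * r (n - 1) ^ 2 + lam (n - 1) * r (n - 1) + ρ (n - 1))
    (hdisc : ∀ n : ℕ, 1 ≤ n → 4 * η * ρ (n - 1) < (1 - lam (n - 1)) ^ 2)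
    (hCr0 : r 0 ≤ C)
    (hClow : ∀ n : ℕ, 1 ≤ n →
      (1 - lam (n - 1) - Real.sqrt ((1 - lam (n - 1)) ^ 2 - 4 * η * ρ (n - 1))) / (2 * η) ≤ C)
    (hChigh : ∀ n : ℕ, 1 ≤ n →
      C ≤ (1 - lam (n - 1) + Real.sqrt ((1 - lam (n - 1)) ^ 2 - 4 * η * ρ (n - 1))) / (2 * η)) :
    ∀ n : ℕ, 1 ≤ n → r (n - 1) ≤ C := by
  have key : ∀ n : ℕ, 0 ≤ r n ∧ r n ≤ C := by
    intro n
    induction n with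
    | zero => exact ⟨hr0, hCr0⟩
    | succ m ih =>
      have h1 : 1 ≤ m + 1 := Nat.le_add_left 1 m
      have hrec' := hrec (m + 1) h1
      have hlow := hClow (m + 1) h1
      have hhigh := hChigh (m + 1) h1
      have hd := hdisc (m + 1) h1
      simp only [Nat.add_sub_cancel] at hrec' hlow hhigh hd
      set s := Real.sqrt ((1 - lam m) ^ 2 - 4 * η * ρ m) with hs
      have hdnn : 0 ≤ (1 - lam m) ^ 2 - 4 * η * ρ m := le_of_lt (by linarith)
      have hs2 : s ^ 2 = (1 - lam m) ^ 2 - 4 * η * ρ m := Real.sq_sqrt hdnn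
      have hsnn : 0 ≤ s := Real.sqrt_nonneg _
      have h2η : 0 < 2 * η := by linarith
      rw [div_le_iff₀ h2η] at hlow
      rw [le_div_iff₀ h2η] at hhigh
      -- ηC² - (1 - lam m) C + ρ m ≤ 0
      have hquad : η * C ^ 2 - (1 - lam m) * C + ρ m ≤ 0 := by
        nlinarith [mul_nonneg (sub_nonneg.2 hlow) (sub_nonneg.2 hhigh)]
      obtain ⟨hrm0, hrmC⟩ := ih
      obtain ⟨hlm0, _⟩ := hlam m
      constructor
      · rw [hrec']
        have := hρ m
        positivity
      · rw [hrec']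
        nlinarith [mul_nonneg (sub_nonneg.2 hrmC) hlm0,
          mul_nonneg (mul_nonneg hη.le (sub_nonneg.2 hrmC)) (by linarith : (0:ℝ) ≤ C + r m)]
  intro n _
  exact (key (n - 1)).2
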